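/- (One-step transfer from m_{k−1} to m_k) For Adam, under assumptions (S1)-(S3) and (A1)-(A2), for all k ∈ ℕ and all θ ∈ ℝ^d: E[(θ_k − θ)ᵀ m_k] ≤ E[(θ_k − θ)ᵀ m_{k−1}] + (1 − β_{1k}) D(θ)(B + √(σ²/b + G²)). -/

import Mathlib

open MeasureTheory Filter Real

lemma adam_aux_abs_coord_le_norm {d : ℕ} (x : EuclideanSpace ℝ (Fin d)) (i : Fin d) :
    |x i| ≤ ‖x‖ := by
  rw [EuclideanSpace.norm_eq, ← Real.sqrt_sq_eq_abs]
  apply Real.sqrt_le_sqrt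
  have := Finset.single_le_sum (f := fun j => ‖x j‖ ^ 2)
    (fun j _ => sq_nonneg _) (Finset.mem_univ i)
  simpa [sq_abs] using this

theorem adam_one_step_transfer
    {Ω : Type*} [MeasurableSpace Ω] (μ : Measure Ω) [IsProbabilityMeasure μ]
    {d : ℕ} (f : EuclideanSpace ℝ (Fin d) → ℝ)
    (θ m mp v g dvec : ℕ → Ω → EuclideanSpace ℝ (Fin d))
    (vhat : ℕ → Ω → Fin d → ℝ)
    (α β1 β2 : ℕ → ℝ)
    (σ2 b G B : ℝ)
    (D : EuclideanSpace ℝ (Fin d) → ℝ)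
    (hf : ContDiff ℝ 1 f)
    (hb : 0 < b) (hσ2 : 0 ≤ σ2) (hG : 0 < G) (hB : 0 < B)
    (hαpos : ∀ k, 0 < α k)
    (hβ1mem : ∀ k, β1 k ∈ Set.Ioo (0:ℝ) 1) (hβ2mem : ∀ k, β2 k ∈ Set.Ico (0:ℝ) 1)
    (hmp0 : ∀ ω, mp 0 ω = 0)
    (hmrec : ∀ k ω, m k ω = β1 k • mp k ω + (1 - β1 k) • g k ω)
    (hmpshift : ∀ k ω, mp (k+1) ω = m k ω)
    (hv0 : ∀ ω (i : Fin d), v 0 ω i = (1 - β2 0) * (g 0 ω i) ^ 2)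
    (hvrec : ∀ k ω (i : Fin d), v (k+1) ω i = β2 (k+1) * v k ω i + (1 - β2 (k+1)) * (g (k+1) ω i) ^ 2)
    (hvhat : ∀ k ω (i : Fin d), vhat k ω i = v k ω i / (1 - (β2 k) ^ (k+1)))
    (hdvec : ∀ k ω (i : Fin d), dvec k ω i = -(m k ω i / (1 - (β1 k) ^ (k+1))) / Real.sqrt (vhat k ω i))
    (hθrec : ∀ k ω, θ (k+1) ω = θ k ω + α k • dvec k ω)
    (hθmeas : ∀ k, Measurable (θ k)) (hgmeas : ∀ k, Measurable (g k))
    (hunbiased : ∀ k, μ[g k | MeasurableSpace.comap (θ k) inferInstance]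
        =ᵐ[μ] fun ω => gradient f (θ k ω))
    (hvar : ∀ k, ∫ ω, ‖g k ω - gradient f (θ k ω)‖ ^ 2 ∂μ ≤ σ2 / b)
    (hGbd : ∀ k, ∀ᵐ ω ∂μ, ‖gradient f (θ k ω)‖ ≤ G)
    (hBbd : ∀ k, ∀ᵐ ω ∂μ, ‖g k ω‖ ≤ B)
    (hDpos : ∀ x, 0 < D x)
    (hDbd : ∀ x k, ∀ᵐ ω ∂μ, ‖θ k ω - x‖ ≤ D x)
    :
    ∀ (k : ℕ) (x : EuclideanSpace ℝ (Fin d)),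
      ∫ ω, (inner ℝ (θ k ω - x) (m k ω) : ℝ) ∂μ ≤
        ∫ ω, (inner ℝ (θ k ω - x) (mp k ω) : ℝ) ∂μ
        + (1 - β1 k) * D x * (B + Real.sqrt (σ2 / b + G ^ 2)) := by
  intro k x
  obtain ⟨hβ1pos, hβ1lt⟩ := hβ1mem k
  set h : Ω → EuclideanSpace ℝ (Fin d) := fun ω => θ k ω - x with hhdef
  have hhmeas : Measurable h := (hθmeas k).sub measurable_const
  -- continuity and measurability of the gradient term
  have hgradcont : Continuous (gradient f) := by
    unfold gradient
    exact (InnerProductSpace.toDual ℝ (EuclideanSpace ℝ (Fin d))).symm.continuous.comp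
      (hf.continuous_fderiv one_ne_zero)
  have hgradmeas : Measurable (fun ω => gradient f (θ k ω)) :=
    hgradcont.measurable.comp (hθmeas k)
  -- measurability of mp and m
  have hmm : ∀ n, Measurable (mp n) ∧ Measurable (m n) := by
    intro n
    induction n with
    | zero =>
      have h0 : Measurable (mp 0) := by
        have : mp 0 = fun _ => 0 := funext hmp0
        rw [this]; exact measurable_const
      refine ⟨h0, ?_⟩
      have : m 0 = fun ω => β1 0 • mp 0 ω + (1 - β1 0) • g 0 ω := funext (hmrec 0)
      rw [this]
      have hg0 := hgmeas 0
      fun_prop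
    | succ n ih =>
      have h0 : Measurable (mp (n+1)) := by
        have : mp (n+1) = m n := funext (hmpshift n)
        rw [this]; exact ih.2
      refine ⟨h0, ?_⟩
      have : m (n+1) = fun ω => β1 (n+1) • mp (n+1) ω + (1 - β1 (n+1)) • g (n+1) ω :=
        funext (hmrec (n+1))
      rw [this]
      have hg0 := hgmeas (n+1)
      fun_prop
  -- a.e. norm bounds for mp and m
  have hstep : ∀ n, (∀ᵐ ω ∂μ, ‖mp n ω‖ ≤ B) → (∀ᵐ ω ∂μ, ‖m n ω‖ ≤ B) := by
    intro n hn
    obtain ⟨hp, hl⟩ := hβ1mem n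
    filter_upwards [hn, hBbd n] with ω h1 h2
    rw [hmrec n ω]
    calc ‖β1 n • mp n ω + (1 - β1 n) • g n ω‖
        ≤ ‖β1 n • mp n ω‖ + ‖(1 - β1 n) • g n ω‖ := norm_add_le _ _
      _ = β1 n * ‖mp n ω‖ + (1 - β1 n) * ‖g n ω‖ := by
          rw [norm_smul, norm_smul, Real.norm_of_nonneg hp.le,
            Real.norm_of_nonneg (by linarith)]
      _ ≤ β1 n * B + (1 - β1 n) * B := by
          have h1' : (0:ℝ) ≤ β1 n := hp.le
          have h2' : (0:ℝ) ≤ 1 - β1 n := by linarith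
          gcongr
      _ = B := by ring
  have hmpb : ∀ n, ∀ᵐ ω ∂μ, ‖mp n ω‖ ≤ B := by
    intro n
    induction n with
    | zero => exact ae_of_all _ fun ω => by rw [hmp0 ω]; simpa using hB.le
    | succ n ih =>
      filter_upwards [hstep n ih] with ω hω
      rw [hmpshift n ω]; exact hω
  have hmb : ∀ᵐ ω ∂μ, ‖m k ω‖ ≤ B := hstep k (hmpb k)
  -- integrability of inner products
  have hinteg : ∀ (u : Ω → EuclideanSpace ℝ (Fin d)) (C : ℝ), Measurable u →
      (∀ᵐ ω ∂μ, ‖u ω‖ ≤ C) →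
      Integrable (fun ω => (inner ℝ (h ω) (u ω) : ℝ)) μ := by
    intro u C hu hbd
    refine Integrable.mono' (integrable_const (D x * C)) ?_ ?_
    · exact (hhmeas.inner hu).aestronglyMeasurable
    · filter_upwards [hbd, hDbd x k] with ω h1 h2
      calc ‖(inner ℝ (h ω) (u ω) : ℝ)‖ ≤ ‖h ω‖ * ‖u ω‖ := norm_inner_le_norm _ _
        _ ≤ D x * C := mul_le_mul h2 h1 (norm_nonneg _) (hDpos x).le
  -- integrability of coordinate products
  have hmulint : ∀ (u : Ω → EuclideanSpace ℝ (Fin d)) (C : ℝ), Measurable u →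
      (∀ᵐ ω ∂μ, ‖u ω‖ ≤ C) → ∀ i : Fin d,
      Integrable (fun ω => h ω i * u ω i) μ := by
    intro u C hu hbd i
    refine Integrable.mono' (integrable_const (D x * C)) ?_ ?_
    · exact (((EuclideanSpace.proj (𝕜 := ℝ) i).continuous.measurable.comp hhmeas).mul
        ((EuclideanSpace.proj (𝕜 := ℝ) i).continuous.measurable.comp hu)).aestronglyMeasurable
    · filter_upwards [hbd, hDbd x k] with ω h1 h2
      have e1 : |h ω i| ≤ ‖h ω‖ := adam_aux_abs_coord_le_norm _ i
      have e2 : |u ω i| ≤ ‖u ω‖ := adam_aux_abs_coord_le_norm _ i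
      have : ‖h ω i * u ω i‖ = |h ω i| * |u ω i| := by
        rw [Real.norm_eq_abs, abs_mul]
      rw [this]
      have hn : (0:ℝ) ≤ ‖h ω‖ := norm_nonneg _
      calc |h ω i| * |u ω i| ≤ ‖h ω‖ * ‖u ω‖ :=
            mul_le_mul e1 e2 (abs_nonneg _) hn
        _ ≤ D x * C := mul_le_mul h2 h1 (norm_nonneg _) (hDpos x).le
  -- setup for conditional expectation
  have hle : MeasurableSpace.comap (θ k) inferInstance ≤ _ := (hθmeas k).comap_le
  haveI : SigmaFinite (μ.trim hle) := inferInstance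
  have hθG : Measurable[(MeasurableSpace.comap (θ k) inferInstance)] (θ k) := Measurable.of_comap_le le_rfl
  have hhG : Measurable[(MeasurableSpace.comap (θ k) inferInstance)] h := hθG.sub measurable_const
  have hgint : Integrable (g k) μ :=
    Integrable.mono' (integrable_const B) (hgmeas k).aestronglyMeasurable (hBbd k)
  have hgradint : Integrable (fun ω => gradient f (θ k ω)) μ :=
    Integrable.mono' (integrable_const G) hgradmeas.aestronglyMeasurable (hGbd k)
  have hgiint : ∀ i : Fin d, Integrable (fun ω => g k ω i) μ := by
    intro i
    refine Integrable.mono' (integrable_const B)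
      ((EuclideanSpace.proj (𝕜 := ℝ) i).continuous.measurable.comp
        (hgmeas k)).aestronglyMeasurable ?_
    filter_upwards [hBbd k] with ω hω
    exact le_trans (by simpa [Real.norm_eq_abs] using adam_aux_abs_coord_le_norm (g k ω) i) hω
  have hgradiint : ∀ i : Fin d, Integrable (fun ω => gradient f (θ k ω) i) μ := by
    intro i
    refine Integrable.mono' (integrable_const G)
      ((EuclideanSpace.proj (𝕜 := ℝ) i).continuous.measurable.comp hgradmeas).aestronglyMeasurable ?_
    filter_upwards [hGbd k] with ω hω
    exact le_trans (by simpa [Real.norm_eq_abs] using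
      adam_aux_abs_coord_le_norm (gradient f (θ k ω)) i) hω
  -- coordinatewise conditional expectation identity
  have hcoord : ∀ i : Fin d,
      (fun ω => gradient f (θ k ω) i) =ᵐ[μ] μ[(fun ω => g k ω i) | (MeasurableSpace.comap (θ k) inferInstance)] := by
    intro i
    refine ae_eq_condExp_of_forall_setIntegral_eq hle (hgiint i)
      (fun s _ _ => (hgradiint i).integrableOn) ?_ ?_
    · intro s hs hμs
      have e1 := ContinuousLinearMap.integral_comp_comm (μ := μ.restrict s)
        (EuclideanSpace.proj (𝕜 := ℝ) i) hgint.integrableOn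
      have e2 := ContinuousLinearMap.integral_comp_comm (μ := μ.restrict s)
        (EuclideanSpace.proj (𝕜 := ℝ) i) hgradint.integrableOn
      simp only [PiLp.proj_apply] at e1 e2
      have hveceq : ∫ ω in s, gradient f (θ k ω) ∂μ = ∫ ω in s, g k ω ∂μ :=
        calc ∫ ω in s, gradient f (θ k ω) ∂μ
            = ∫ ω in s, (μ[g k | (MeasurableSpace.comap (θ k) inferInstance)]) ω ∂μ :=
              (integral_congr_ae (ae_restrict_of_ae (hunbiased k))).symm
          _ = ∫ ω in s, g k ω ∂μ := setIntegral_condExp hle hgint hs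
      calc ∫ ω in s, gradient f (θ k ω) i ∂μ
          = (∫ ω in s, gradient f (θ k ω) ∂μ) i := e2
        _ = (∫ ω in s, g k ω ∂μ) i := by rw [hveceq]
        _ = ∫ ω in s, g k ω i ∂μ := e1.symm
    · exact StronglyMeasurable.aestronglyMeasurable
        (((EuclideanSpace.proj (𝕜 := ℝ) i).continuous.comp
          hgradcont).measurable.comp hθG).stronglyMeasurable
  -- strong (MeasurableSpace.comap (θ k) inferInstance)-measurability of coordinates of h
  have hhiSM : ∀ i : Fin d, StronglyMeasurable[(MeasurableSpace.comap (θ k) inferInstance)] (fun ω => h ω i) := fun i =>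
    ((EuclideanSpace.proj (𝕜 := ℝ) i).continuous.measurable.comp hhG).stronglyMeasurable
  -- key coordinate swap
  have hswap : ∀ i : Fin d,
      ∫ ω, h ω i * g k ω i ∂μ = ∫ ω, h ω i * gradient f (θ k ω) i ∂μ := by
    intro i
    have hint1 : Integrable ((fun ω => h ω i) * fun ω => g k ω i) μ :=
      hmulint (g k) B (hgmeas k) (hBbd k) i
    have hpull := condExp_mul_of_stronglyMeasurable_left (μ := μ) (hhiSM i) hint1 (hgiint i)
    calc ∫ ω, h ω i * g k ω i ∂μ
        = ∫ ω, (μ[(fun ω => h ω i) * (fun ω => g k ω i)|(MeasurableSpace.comap (θ k) inferInstance)]) ω ∂μ :=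
          (integral_condExp hle).symm
      _ = ∫ ω, ((fun ω => h ω i) * μ[(fun ω => g k ω i)|(MeasurableSpace.comap (θ k) inferInstance)]) ω ∂μ :=
          integral_congr_ae hpull
      _ = ∫ ω, h ω i * gradient f (θ k ω) i ∂μ := by
          refine integral_congr_ae ?_
          filter_upwards [hcoord i] with ω hω
          simp only [Pi.mul_apply, ← hω]
  -- splitting inner products into coordinates
  have hinner_eq : ∀ (u : Ω → EuclideanSpace ℝ (Fin d)) (ω : Ω),
      (inner ℝ (h ω) (u ω) : ℝ) = ∑ i : Fin d, h ω i * u ω i := by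
    intro u ω
    simp [PiLp.inner_apply, RCLike.inner_apply, conj_trivial]
    exact Finset.sum_congr rfl fun _ _ => mul_comm _ _
  have hsplit : ∀ (u : Ω → EuclideanSpace ℝ (Fin d)) (C : ℝ), Measurable u →
      (∀ᵐ ω ∂μ, ‖u ω‖ ≤ C) →
      ∫ ω, (inner ℝ (h ω) (u ω) : ℝ) ∂μ = ∑ i : Fin d, ∫ ω, h ω i * u ω i ∂μ := by
    intro u C hu hbd
    rw [← integral_finset_sum _ (fun i _ => hmulint u C hu hbd i)]
    exact integral_congr_ae (ae_of_all _ fun ω => hinner_eq u ω)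
  -- key identity
  have hkey : ∫ ω, (inner ℝ (h ω) (g k ω) : ℝ) ∂μ
      = ∫ ω, (inner ℝ (h ω) (gradient f (θ k ω)) : ℝ) ∂μ := by
    rw [hsplit (g k) B (hgmeas k) (hBbd k), hsplit _ G hgradmeas (hGbd k)]
    exact Finset.sum_congr rfl fun i _ => hswap i
  -- expansion of the m-integral
  have hexp : ∫ ω, (inner ℝ (h ω) (m k ω) : ℝ) ∂μ
      = β1 k * ∫ ω, (inner ℝ (h ω) (mp k ω) : ℝ) ∂μ
        + (1 - β1 k) * ∫ ω, (inner ℝ (h ω) (g k ω) : ℝ) ∂μ := by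
    have e : ∀ ω, (inner ℝ (h ω) (m k ω) : ℝ)
        = β1 k * inner ℝ (h ω) (mp k ω) + (1 - β1 k) * inner ℝ (h ω) (g k ω) := by
      intro ω
      rw [hmrec k ω, inner_add_right, real_inner_smul_right, real_inner_smul_right]
    calc ∫ ω, (inner ℝ (h ω) (m k ω) : ℝ) ∂μ
        = ∫ ω, (β1 k * inner ℝ (h ω) (mp k ω) + (1 - β1 k) * inner ℝ (h ω) (g k ω)) ∂μ :=
          integral_congr_ae (ae_of_all _ e)
      _ = _ := by
          rw [integral_add ((hinteg (mp k) B (hmm k).1 (hmpb k)).const_mul _)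
            ((hinteg (g k) B (hgmeas k) (hBbd k)).const_mul _),
            integral_const_mul, integral_const_mul]
  -- bounds on the integrals
  have hIg : ∫ ω, (inner ℝ (h ω) (g k ω) : ℝ) ∂μ ≤ D x * G := by
    rw [hkey]
    have hmono := integral_mono_ae (hinteg _ G hgradmeas (hGbd k))
      (integrable_const (D x * G)) ?_
    · simpa using hmono
    · filter_upwards [hGbd k, hDbd x k] with ω h1 h2
      calc (inner ℝ (h ω) (gradient f (θ k ω)) : ℝ) ≤ ‖h ω‖ * ‖gradient f (θ k ω)‖ :=
            real_inner_le_norm _ _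
        _ ≤ D x * G := mul_le_mul h2 h1 (norm_nonneg _) (hDpos x).le
  have hIp : -(D x * B) ≤ ∫ ω, (inner ℝ (h ω) (mp k ω) : ℝ) ∂μ := by
    have hmono := integral_mono_ae (integrable_const (-(D x * B)))
      (hinteg (mp k) B (hmm k).1 (hmpb k)) ?_
    · simpa using hmono
    · filter_upwards [hmpb k, hDbd x k] with ω h1 h2
      have : |(inner ℝ (h ω) (mp k ω) : ℝ)| ≤ D x * B := by
        calc |(inner ℝ (h ω) (mp k ω) : ℝ)| ≤ ‖h ω‖ * ‖mp k ω‖ := abs_real_inner_le_norm _ _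
          _ ≤ D x * B := mul_le_mul h2 h1 (norm_nonneg _) (hDpos x).le
      linarith [(abs_le.mp this).1]
  -- final arithmetic
  have hGS : G ≤ Real.sqrt (σ2 / b + G ^ 2) := by
    have h1 : G = Real.sqrt (G ^ 2) := (Real.sqrt_sq hG.le).symm
    rw [h1]
    exact Real.sqrt_le_sqrt (by nlinarith [div_nonneg hσ2 hb.le])
  set S := Real.sqrt (σ2 / b + G ^ 2) with hS
  set Ip := ∫ ω, (inner ℝ (h ω) (mp k ω) : ℝ) ∂μ with hIpdef
  set Ig := ∫ ω, (inner ℝ (h ω) (g k ω) : ℝ) ∂μ with hIgdef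
  have hIgS : Ig ≤ D x * S := hIg.trans (mul_le_mul_of_nonneg_left hGS (hDpos x).le)
  have hfac : (0:ℝ) ≤ 1 - β1 k := by linarith
  have hprod : (1 - β1 k) * (Ig - Ip) ≤ (1 - β1 k) * (D x * S + D x * B) :=
    mul_le_mul_of_nonneg_left (by linarith) hfac
  rw [hexp]
  nlinarith [hprod]
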